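/- Let J be a nonempty finite index set, let π : J → ℝ be nonnegative weights with ∑_{j∈J} π_j = 1, and fix reals p_j > 0 for each j ∈ J and q > 0. Define D_j = p_j/(p_j + q) for each j, and set p = ∑_{j∈J} π_j · p_j. Then ∑_{j∈J} π_j · Φ(D_j) = p/q, and consequently, with S = ∑_{j∈J} π_j · Φ(D_j), one has S/(1+S) = p/(p+q). -/

import Mathlib

open Finset

/-- The odds value of a probability `φ`. -/
noncomputable def oddsValue (φ : ℝ) : ℝ := φ / (1 - φ)

/-- Universal aggregation identity: if each local discriminator is optimal,
`D j = p j / (p j + q)`, then the mixture of odds values equals `p/q` where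
`p = ∑ j, π j * p j`, and consequently `S/(1+S) = p/(p+q)` where
`S = ∑ j, π j * Φ(D j)`. -/
theorem stmt_2 {J : Type*} [Fintype J] [Nonempty J]
    (π : J → ℝ) (hπ : ∀ j, 0 ≤ π j) (hπs : ∑ j, π j = 1)
    (p : J → ℝ) (hp : ∀ j, 0 < p j) (q : ℝ) (hq : 0 < q)
    (D : J → ℝ) (hD : ∀ j, D j = p j / (p j + q)) :
    (∑ j, π j * oddsValue (D j)) = (∑ j, π j * p j) / q ∧
    (∑ j, π j * oddsValue (D j)) / (1 + ∑ j, π j * oddsValue (D j)) =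
      (∑ j, π j * p j) / ((∑ j, π j * p j) + q) := by
  have hodds : ∀ j, oddsValue (D j) = p j / q := by
    intro j
    have hpq : p j + q ≠ 0 := by have := hp j; positivity
    rw [hD, oddsValue]
    field_simp
    rw [add_sub_cancel_left, mul_div_assoc, div_self hq.ne', mul_one]
  have hsum : (∑ j, π j * oddsValue (D j)) = (∑ j, π j * p j) / q := by
    rw [Finset.sum_div]
    exact Finset.sum_congr rfl fun j _ => by rw [hodds, mul_div_assoc]
  refine ⟨hsum, ?_⟩
  rw [hsum]
  have hP : 0 ≤ ∑ j, π j * p j :=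
    Finset.sum_nonneg fun j _ => mul_nonneg (hπ j) (hp j).le
  have hPq : (∑ j, π j * p j) + q ≠ 0 := by positivity
  have h1 : (0:ℝ) < 1 + (∑ j, π j * p j) / q := by positivity
  field_simp
  ring
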